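/- Compactness of classical propositional logic, contrapositive form (the classical content of Theorem 11.3(i), FT ↔ 'every positively unrealizable enumerated set of formulas has an unrealizable finite initial part'): for every F : ℕ → PropForm, if every valuation γ : ℕ → Bool falsifies some formula in the list (∀ γ, ∃ n, eval γ (F n) = false), then there exists m such that every valuation falsifies some F n with n < m (∃ m, ∀ γ, ∃ n < m, eval γ (F n) = false). -/

import Mathlib

/-- Propositional formulas: variables, negation, finite conjunctions and disjunctions. -/
inductive PropForm : Type
  | var : ℕ → PropForm
  | neg : PropForm → PropForm
  | conj : List PropForm → PropForm
  | disj : List PropForm → PropForm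

/-- Evaluation of a propositional formula under a valuation `γ`. -/
def eval (γ : ℕ → Bool) : PropForm → Bool
  | .var n => γ n
  | .neg φ => !(eval γ φ)
  | .conj L => L.attach.all (fun ⟨ψ, hψ⟩ => eval γ ψ)
  | .disj L => L.attach.any (fun ⟨ψ, hψ⟩ => eval γ ψ)
decreasing_by
  all_goals simp
  all_goals (have := List.sizeOf_lt_of_mem hψ; omega)

lemma eval_conj (γ : ℕ → Bool) (L : List PropForm) : eval γ (.conj L) = L.all (eval γ) := by
  rw [eval]; simp [List.all_eq]

lemma eval_disj (γ : ℕ → Bool) (L : List PropForm) : eval γ (.disj L) = L.any (eval γ) := by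
  rw [eval]; simp [List.any_eq]

lemma continuous_all (L : List PropForm)
    (h : ∀ ψ ∈ L, Continuous fun γ : ℕ → Bool => eval γ ψ) :
    Continuous fun γ : ℕ → Bool => L.all (eval γ) := by
  induction L with
  | nil => simpa using continuous_const
  | cons a L ih =>
    have h1 := h a (by simp)
    have h2 := ih fun ψ hψ => h ψ (by simp [hψ])
    have : (fun γ : ℕ → Bool => (a :: L).all (eval γ)) =
        (fun p : Bool × Bool => p.1 && p.2) ∘ fun γ => (eval γ a, L.all (eval γ)) := by
      funext γ; simp
    rw [this]
    exact (continuous_of_discreteTopology).comp (h1.prodMk h2)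

lemma continuous_any (L : List PropForm)
    (h : ∀ ψ ∈ L, Continuous fun γ : ℕ → Bool => eval γ ψ) :
    Continuous fun γ : ℕ → Bool => L.any (eval γ) := by
  induction L with
  | nil => simpa using continuous_const
  | cons a L ih =>
    have h1 := h a (by simp)
    have h2 := ih fun ψ hψ => h ψ (by simp [hψ])
    have : (fun γ : ℕ → Bool => (a :: L).any (eval γ)) =
        (fun p : Bool × Bool => p.1 || p.2) ∘ fun γ => (eval γ a, L.any (eval γ)) := by
      funext γ; simp
    rw [this]
    exact (continuous_of_discreteTopology).comp (h1.prodMk h2)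

lemma continuous_eval : ∀ φ : PropForm, Continuous fun γ : ℕ → Bool => eval γ φ
  | .var n => by simpa [eval] using continuous_apply n
  | .neg φ => by
      have h := continuous_eval φ
      have : (fun γ : ℕ → Bool => eval γ (.neg φ)) = Bool.not ∘ fun γ => eval γ φ := by
        funext γ; simp [eval]
      rw [this]
      exact (continuous_of_discreteTopology).comp h
  | .conj L => by
      simp only [eval_conj]
      exact continuous_all L fun ψ hψ => continuous_eval ψ
  | .disj L => by
      simp only [eval_disj]
      exact continuous_any L fun ψ hψ => continuous_eval ψ
termination_by φ => sizeOf φ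
decreasing_by
  all_goals simp
  all_goals (have := List.sizeOf_lt_of_mem hψ; omega)

/-- Compactness of classical propositional logic, contrapositive form
(the classical content of Theorem 11.3(i)). -/
theorem compactness_propositional_logic (F : ℕ → PropForm)
    (h : ∀ γ : ℕ → Bool, ∃ n, eval γ (F n) = false) :
    ∃ m, ∀ γ : ℕ → Bool, ∃ n < m, eval γ (F n) = false := by
  set U : ℕ → Set (ℕ → Bool) := fun n => {γ | eval γ (F n) = false} with hU
  have hopen : ∀ n, IsOpen (U n) := fun n =>
    (continuous_eval (F n)).isOpen_preimage {false} (isOpen_discrete _)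
  have hcover : (Set.univ : Set (ℕ → Bool)) ⊆ ⋃ n, U n := by
    intro γ _
    obtain ⟨n, hn⟩ := h γ
    exact Set.mem_iUnion.2 ⟨n, hn⟩
  obtain ⟨t, ht⟩ := isCompact_univ.elim_finite_subcover U hopen hcover
  obtain ⟨m, hm⟩ : ∃ m, ∀ n ∈ t, n < m := ⟨t.sup id + 1, fun n hn =>
    Nat.lt_succ_of_le (Finset.le_sup (f := id) hn)⟩
  refine ⟨m, fun γ => ?_⟩
  obtain ⟨n, hn, hγ⟩ := Set.mem_iUnion₂.1 (ht (Set.mem_univ γ))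
  exact ⟨n, hm n hn, hγ⟩
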